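/- The map p ↦ (x^ℝ, s^ℝ, B^ℝ) := (Re(conj(p))/√(|p|²-1), -2 Im(p), 1/√(|p|²-1)) is a bijection from {p ∈ ℂ : |p| > 1} onto the set of triples (x, s, B) of real numbers with B > 0 and x² + (s²/4 - 1)B² = 1. -/

import Mathlib

open Complex

/-- The map `p ↦ (Re(conj p)/√(|p|²-1), -2 Im p, 1/√(|p|²-1))` is a bijection from
`{p : |p| > 1}` onto the `B > 0` part of the monodromy surface
`{(x,s,B) : x² + (s²/4 - 1)B² = 1}`. -/
theorem p_parametrization_bijection :
    Set.BijOn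
      (fun p : ℂ =>
        (((starRingEnd ℂ p).re / Real.sqrt (‖p‖ ^ 2 - 1), -2 * p.im,
          1 / Real.sqrt (‖p‖ ^ 2 - 1)) : ℝ × ℝ × ℝ))
      {p : ℂ | 1 < ‖p‖}
      {t : ℝ × ℝ × ℝ | 0 < t.2.2 ∧ t.1 ^ 2 + (t.2.1 ^ 2 / 4 - 1) * t.2.2 ^ 2 = 1} := by
  refine ⟨?_, ?_, ?_⟩
  · intro p hp
    have h1 : (1:ℝ) < ‖p‖ := hp
    have habs : 0 < ‖p‖ ^ 2 - 1 := by nlinarith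
    have hr : 0 < Real.sqrt (‖p‖ ^ 2 - 1) := Real.sqrt_pos.mpr habs
    have hsq : Real.sqrt (‖p‖ ^ 2 - 1) ^ 2 = ‖p‖ ^ 2 - 1 :=
      Real.sq_sqrt habs.le
    have habs2 : ‖p‖ ^ 2 = p.re ^ 2 + p.im ^ 2 := by
      rw [Complex.sq_norm, Complex.normSq_apply]; ring
    refine ⟨by positivity, ?_⟩
    simp only [Complex.conj_re]
    field_simp
    nlinarith [hsq, habs2]
  · intro p hp q hq h
    have h1 : (1:ℝ) < ‖p‖ := hp
    have h2 : (1:ℝ) < ‖q‖ := hq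
    have hrp : 0 < Real.sqrt (‖p‖ ^ 2 - 1) :=
      Real.sqrt_pos.mpr (by nlinarith)
    have hrq : 0 < Real.sqrt (‖q‖ ^ 2 - 1) :=
      Real.sqrt_pos.mpr (by nlinarith)
    have e1 := congrArg Prod.fst h
    have e2 := congrArg (fun t : ℝ × ℝ × ℝ => t.2.1) h
    have e3 := congrArg (fun t : ℝ × ℝ × ℝ => t.2.2) h
    simp only [Complex.conj_re] at e1 e2 e3
    have hreq : Real.sqrt (‖p‖ ^ 2 - 1) = Real.sqrt (‖q‖ ^ 2 - 1) := by
      field_simp at e3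
      linarith
    apply Complex.ext
    · rw [hreq] at e1
      field_simp [hrq.ne'] at e1; exact e1
    · linarith
  · rintro ⟨x, s, B⟩ ⟨hB, heq⟩
    simp only [Set.mem_setOf_eq] at hB heq
    refine ⟨⟨x / B, -s / 2⟩, ?_, ?_⟩
    · have habs2 : ‖(⟨x / B, -s / 2⟩ : ℂ)‖ ^ 2 = 1 / B ^ 2 + 1 := by
        rw [Complex.sq_norm, Complex.normSq_mk]
        field_simp
        nlinarith [heq]
      have : (1:ℝ) < ‖(⟨x / B, -s / 2⟩ : ℂ)‖ ^ 2 := by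
        rw [habs2]; have : 0 < 1 / B ^ 2 := by positivity
        linarith
      show (1:ℝ) < ‖(⟨x / B, -s / 2⟩ : ℂ)‖
      nlinarith [norm_nonneg (⟨x / B, -s / 2⟩ : ℂ)]
    · have habs2 : ‖(⟨x / B, -s / 2⟩ : ℂ)‖ ^ 2 = 1 / B ^ 2 + 1 := by
        rw [Complex.sq_norm, Complex.normSq_mk]
        field_simp
        nlinarith [heq]
      have hsqrt : Real.sqrt (‖(⟨x / B, -s / 2⟩ : ℂ)‖ ^ 2 - 1) = 1 / B := by
        rw [habs2]
        have : (1:ℝ) / B ^ 2 + 1 - 1 = (1 / B) ^ 2 := by ring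
        rw [this, Real.sqrt_sq (by positivity)]
      simp only [hsqrt, Complex.conj_re]
      refine Prod.ext ?_ (Prod.ext ?_ ?_)
      · show (⟨x / B, -s / 2⟩ : ℂ).re / (1 / B) = x
        field_simp
      · show -2 * (⟨x / B, -s / 2⟩ : ℂ).im = s
        show -2 * (-s / 2) = s
        ring
      · show 1 / (1 / B) = B
        field_simp
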